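/- Let K be a lattice satisfying Whitman's condition (W), generated by elements that are both join prime and meet prime (e.g., a free lattice). Then the map κ : Id(K) → DM(K) defined by κ(I) = I^{uℓ} is a lattice homomorphism that fixes every DM-closed ideal; hence DM(K) is a retract of Id(K). -/
import Mathlib


/-- Whitman's condition (W). -/
def WhitmanCondition (α : Type*) [Lattice α] : Prop :=
  ∀ s t u v : α, s ⊓ t ≤ u ⊔ v → s ≤ u ⊔ v ∨ t ≤ u ⊔ v ∨ s ⊓ t ≤ u ∨ s ⊓ t ≤ v

/-- An ideal of a lattice: a nonempty downward-closed subset closed under binary joins. -/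
def IsLatIdeal {L : Type*} [Lattice L] (I : Set L) : Prop :=
  I.Nonempty ∧ (∀ a b : L, a ≤ b → b ∈ I → a ∈ I) ∧ ∀ a ∈ I, ∀ b ∈ I, a ⊔ b ∈ I

/-- The join of two ideals (as sets): the downward closure of pairwise joins. -/
def idealJoin {L : Type*} [Lattice L] (I J : Set L) : Set L :=
  {w : L | ∃ i ∈ I, ∃ j ∈ J, w ≤ i ⊔ j}

/-- Dedekind–MacNeille closed subset: `C = C^{uℓ}`. -/
def DMClosed {L : Type*} [Lattice L] (C : Set L) : Prop :=
  C = lowerBounds (upperBounds C)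

/-- The Dedekind–MacNeille closure map `κ(I) = I^{uℓ}`. -/
def dmClosure {L : Type*} [Lattice L] (I : Set L) : Set L :=
  lowerBounds (upperBounds I)

section Aux

variable {K : Type*} [Lattice K]

lemma subset_dmClosure' {I : Set K} : I ⊆ dmClosure I := by
  intro a ha z hz
  exact hz ha

lemma upperBounds_dmClosure' (I : Set K) :
    upperBounds (dmClosure I) = upperBounds I := by
  apply subset_antisymm
  · exact upperBounds_mono_set subset_dmClosure'
  · intro z hz a ha
    exact ha hz

lemma dmClosure_isIdeal' {I : Set K} (hI : IsLatIdeal I) :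
    IsLatIdeal (dmClosure I) ∧ DMClosed (dmClosure I) := by
  obtain ⟨⟨i0, hi0⟩, hdown, hjoin⟩ := hI
  refine ⟨⟨⟨i0, subset_dmClosure' hi0⟩, ?_, ?_⟩, ?_⟩
  · intro a b hab hb z hz
    exact le_trans hab (hb hz)
  · intro a ha b hb z hz
    exact sup_le (ha hz) (hb hz)
  · unfold DMClosed
    rw [upperBounds_dmClosure']
    rfl

/-- Key lemma for meet preservation: if `a` is below every upper bound of `I`
and of `J`, then `a` is below every upper bound of `I ∩ J`. Structural
induction on `w` via generation by doubly prime elements. -/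
lemma claimB' (hW : WhitmanCondition K) {X : Set K}
    (hXmp : ∀ x ∈ X, ∀ b c : K, b ⊓ c ≤ x → b ≤ x ∨ c ≤ x)
    (hXgen : ∀ S : Sublattice K, X ⊆ (S : Set K) → ∀ a : K, a ∈ S)
    (I J : Set K) (hI : IsLatIdeal I) (hJ : IsLatIdeal J)
    (a : K) (haI : a ∈ dmClosure I) (haJ : a ∈ dmClosure J)
    (w : K) (hw : w ∈ upperBounds (I ∩ J)) : a ≤ w := by
  let P : K → Prop := fun w => ∀ I J : Set K, IsLatIdeal I → IsLatIdeal J →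
      ∀ a : K, a ∈ dmClosure I → a ∈ dmClosure J → w ∈ upperBounds (I ∩ J) → a ≤ w
  suffices h : ∀ w, P w by exact h w I J hI hJ a haI haJ hw
  have hsup : SupClosed {w | P w} := by
    intro w1 h1 w2 h2 I J hI hJ a haI haJ hw
    by_cases hwI : w1 ⊔ w2 ∈ upperBounds I
    · exact haI hwI
    by_cases hwJ : w1 ⊔ w2 ∈ upperBounds J
    · exact haJ hwJ
    rw [mem_upperBounds] at hwI hwJ
    push_neg at hwI hwJ
    obtain ⟨i0, hi0I, hi0⟩ := hwI
    obtain ⟨j0, hj0J, hj0⟩ := hwJ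
    have key : ∀ v, v ∈ I ∩ J → v ≤ w1 ∨ v ≤ w2 := by
      intro v hv
      have hiv : v ⊔ i0 ∈ I := hI.2.2 v hv.1 i0 hi0I
      have hjv : v ⊔ j0 ∈ J := hJ.2.2 v hv.2 j0 hj0J
      have hm : (v ⊔ i0) ⊓ (v ⊔ j0) ∈ I ∩ J :=
        ⟨hI.2.1 _ _ inf_le_left hiv, hJ.2.1 _ _ inf_le_right hjv⟩
      have hle : (v ⊔ i0) ⊓ (v ⊔ j0) ≤ w1 ⊔ w2 := hw hm
      have hvle : v ≤ (v ⊔ i0) ⊓ (v ⊔ j0) := le_inf le_sup_left le_sup_left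
      rcases hW _ _ _ _ hle with h | h | h | h
      · exact absurd (le_trans le_sup_right h) hi0
      · exact absurd (le_trans le_sup_right h) hj0
      · exact Or.inl (le_trans hvle h)
      · exact Or.inr (le_trans hvle h)
    by_cases h1' : w1 ∈ upperBounds (I ∩ J)
    · exact le_trans (h1 I J hI hJ a haI haJ h1') le_sup_left
    · rw [mem_upperBounds] at h1'
      push_neg at h1'
      obtain ⟨u, huIJ, hu1⟩ := h1'
      have h2' : w2 ∈ upperBounds (I ∩ J) := by
        intro v hv
        have huv : u ⊔ v ∈ I ∩ J :=
          ⟨hI.2.2 _ huIJ.1 _ hv.1, hJ.2.2 _ huIJ.2 _ hv.2⟩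
        rcases key _ huv with h | h
        · exact absurd (le_trans le_sup_left h) hu1
        · exact le_trans le_sup_right h
      exact le_trans (h2 I J hI hJ a haI haJ h2') le_sup_right
  have hinf : InfClosed {w | P w} := by
    intro w1 h1 w2 h2 I J hI hJ a haI haJ hw
    have hw1 : w1 ∈ upperBounds (I ∩ J) := fun v hv => le_trans (hw hv) inf_le_left
    have hw2 : w2 ∈ upperBounds (I ∩ J) := fun v hv => le_trans (hw hv) inf_le_right
    exact le_inf (h1 I J hI hJ a haI haJ hw1) (h2 I J hI hJ a haI haJ hw2)
  have hXsub : X ⊆ {w | P w} := by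
    intro y hy I J hI hJ a haI haJ hw
    by_cases hyI : y ∈ upperBounds I
    · exact haI hyI
    rw [mem_upperBounds] at hyI
    push_neg at hyI
    obtain ⟨i0, hi0I, hi0⟩ := hyI
    have hyJ : y ∈ upperBounds J := by
      intro j hj
      have hle : i0 ⊓ j ≤ y :=
        hw ⟨hI.2.1 _ _ inf_le_left hi0I, hJ.2.1 _ _ inf_le_right hj⟩
      rcases hXmp y hy i0 j hle with h | h
      · exact absurd h hi0
      · exact h
    exact haJ hyJ
  exact fun w => hXgen ⟨{w | P w}, hsup, hinf⟩ hXsub w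

/-- Key lemma for join preservation: the ideal join of two DM-closed ideals
is DM-closed. Structural induction on `c`. -/
lemma claimA' (hW : WhitmanCondition K) {X : Set K}
    (hXjp : ∀ x ∈ X, ∀ b c : K, x ≤ b ⊔ c → x ≤ b ∨ x ≤ c)
    (hXgen : ∀ S : Sublattice K, X ⊆ (S : Set K) → ∀ a : K, a ∈ S)
    (A B : Set K) (hA : IsLatIdeal A) (hB : IsLatIdeal B)
    (hcA : DMClosed A) (hcB : DMClosed B)
    (c : K) (hc : c ∈ lowerBounds (upperBounds A ∩ upperBounds B)) :
    c ∈ idealJoin A B := by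
  let P : K → Prop := fun c => ∀ A B : Set K, IsLatIdeal A → IsLatIdeal B →
      DMClosed A → DMClosed B →
      c ∈ lowerBounds (upperBounds A ∩ upperBounds B) → c ∈ idealJoin A B
  suffices h : ∀ c, P c by exact h c A B hA hB hcA hcB hc
  have hsup : SupClosed {c | P c} := by
    intro c1 h1 c2 h2 A B hA hB hcA hcB hc
    have hc1 : c1 ∈ lowerBounds (upperBounds A ∩ upperBounds B) :=
      fun z hz => le_trans le_sup_left (hc hz)
    have hc2 : c2 ∈ lowerBounds (upperBounds A ∩ upperBounds B) :=
      fun z hz => le_trans le_sup_right (hc hz)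
    obtain ⟨a1, ha1, b1, hb1, hle1⟩ := h1 A B hA hB hcA hcB hc1
    obtain ⟨a2, ha2, b2, hb2, hle2⟩ := h2 A B hA hB hcA hcB hc2
    refine ⟨a1 ⊔ a2, hA.2.2 _ ha1 _ ha2, b1 ⊔ b2, hB.2.2 _ hb1 _ hb2, ?_⟩
    exact sup_le (le_trans hle1 (sup_le_sup le_sup_left le_sup_left))
      (le_trans hle2 (sup_le_sup le_sup_right le_sup_right))
  have hinf : InfClosed {c | P c} := by
    intro c1 h1 c2 h2 A B hA hB hcA hcB hc
    obtain ⟨a0, ha0⟩ := hA.1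
    obtain ⟨b0, hb0⟩ := hB.1
    by_cases hiA : ∀ p ∈ upperBounds A, c1 ⊓ c2 ≤ p
    · have hmem : c1 ⊓ c2 ∈ A := by
        rw [hcA]
        intro z hz
        exact hiA z hz
      exact ⟨c1 ⊓ c2, hmem, b0, hb0, le_sup_left⟩
    by_cases hiB : ∀ q ∈ upperBounds B, c1 ⊓ c2 ≤ q
    · have hmem : c1 ⊓ c2 ∈ B := by
        rw [hcB]
        intro z hz
        exact hiB z hz
      exact ⟨a0, ha0, c1 ⊓ c2, hmem, le_sup_right⟩
    push_neg at hiA hiB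
    obtain ⟨p0, hp0A, hp0⟩ := hiA
    obtain ⟨q0, hq0B, hq0⟩ := hiB
    have key : ∀ p ∈ upperBounds A, ∀ q ∈ upperBounds B,
        c1 ≤ p ⊔ q ∨ c2 ≤ p ⊔ q := by
      intro p hp q hq
      have hp' : p ⊓ p0 ∈ upperBounds A := fun z hz => le_inf (hp hz) (hp0A hz)
      have hq' : q ⊓ q0 ∈ upperBounds B := fun z hz => le_inf (hq hz) (hq0B hz)
      have hmemA : (p ⊓ p0) ⊔ (q ⊓ q0) ∈ upperBounds A :=
        fun z hz => le_trans (hp' hz) le_sup_left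
      have hmemB : (p ⊓ p0) ⊔ (q ⊓ q0) ∈ upperBounds B :=
        fun z hz => le_trans (hq' hz) le_sup_right
      have hle : c1 ⊓ c2 ≤ (p ⊓ p0) ⊔ (q ⊓ q0) := hc ⟨hmemA, hmemB⟩
      rcases hW c1 c2 (p ⊓ p0) (q ⊓ q0) hle with h | h | h | h
      · exact Or.inl (le_trans h (sup_le_sup inf_le_left inf_le_left))
      · exact Or.inr (le_trans h (sup_le_sup inf_le_left inf_le_left))
      · exact absurd (le_trans h inf_le_right) hp0
      · exact absurd (le_trans h inf_le_right) hq0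
    by_cases hd : ∀ p ∈ upperBounds A, ∀ q ∈ upperBounds B, c1 ≤ p ⊔ q
    · have hc1 : c1 ∈ lowerBounds (upperBounds A ∩ upperBounds B) := by
        intro z hz
        have := hd z hz.1 z hz.2
        simpa using this
      obtain ⟨a, ha, b, hb, hab⟩ := h1 A B hA hB hcA hcB hc1
      exact ⟨a, ha, b, hb, le_trans inf_le_left hab⟩
    · push_neg at hd
      obtain ⟨p1, hp1, q1, hq1, hne⟩ := hd
      have hc2 : c2 ∈ lowerBounds (upperBounds A ∩ upperBounds B) := by
        intro z hz
        have hp' : z ⊓ p1 ∈ upperBounds A := fun t ht => le_inf (hz.1 ht) (hp1 ht)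
        have hq' : z ⊓ q1 ∈ upperBounds B := fun t ht => le_inf (hz.2 ht) (hq1 ht)
        rcases key _ hp' _ hq' with h | h
        · exact absurd (le_trans h (sup_le_sup inf_le_right inf_le_right)) hne
        · exact le_trans h (sup_le inf_le_left inf_le_left)
      obtain ⟨a, ha, b, hb, hab⟩ := h2 A B hA hB hcA hcB hc2
      exact ⟨a, ha, b, hb, le_trans inf_le_right hab⟩
  have hXsub : X ⊆ {c | P c} := by
    intro x hx A B hA hB hcA hcB hc
    obtain ⟨a0, ha0⟩ := hA.1
    obtain ⟨b0, hb0⟩ := hB.1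
    by_cases hxA : x ∈ A
    · exact ⟨x, hxA, b0, hb0, le_sup_left⟩
    by_cases hxB : x ∈ B
    · exact ⟨a0, ha0, x, hxB, le_sup_right⟩
    obtain ⟨p, hpA, hxp⟩ : ∃ p ∈ upperBounds A, ¬ x ≤ p := by
      by_contra h
      push_neg at h
      refine absurd ?_ hxA
      rw [hcA]
      intro z hz
      exact h z hz
    obtain ⟨q, hqB, hxq⟩ : ∃ q ∈ upperBounds B, ¬ x ≤ q := by
      by_contra h
      push_neg at h
      refine absurd ?_ hxB
      rw [hcB]
      intro z hz
      exact h z hz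
    have hpq : p ⊔ q ∈ upperBounds A ∩ upperBounds B :=
      ⟨fun z hz => le_trans (hpA hz) le_sup_left,
       fun z hz => le_trans (hqB hz) le_sup_right⟩
    rcases hXjp x hx p q (hc hpq) with h | h
    · exact absurd h hxp
    · exact absurd h hxq
  exact fun c => hXgen ⟨{c | P c}, hsup, hinf⟩ hXsub c

end Aux

/-- Let `K` satisfy (W) and be generated by doubly prime elements (e.g. a free
lattice). Then `κ(I) = I^{uℓ}` maps ideals to DM-closed ideals, is a lattice
homomorphism from `Id(K)` to `DM(K)`, and fixes every DM-closed ideal; hence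
`DM(K)` is a retract of `Id(K)`. -/
theorem dm_retract_of_ideals {K : Type*} [Lattice K]
    (hW : WhitmanCondition K) (X : Set K)
    (hXjp : ∀ x ∈ X, ∀ b c : K, x ≤ b ⊔ c → x ≤ b ∨ x ≤ c)
    (hXmp : ∀ x ∈ X, ∀ b c : K, b ⊓ c ≤ x → b ≤ x ∨ c ≤ x)
    (hXgen : ∀ S : Sublattice K, X ⊆ (S : Set K) → ∀ a : K, a ∈ S) :
    (∀ I : Set K, IsLatIdeal I → IsLatIdeal (dmClosure I) ∧ DMClosed (dmClosure I)) ∧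
    (∀ I J : Set K, IsLatIdeal I → IsLatIdeal J →
        dmClosure (idealJoin I J) = idealJoin (dmClosure I) (dmClosure J) ∧
        dmClosure (I ∩ J) = dmClosure I ∩ dmClosure J) ∧
    (∀ I : Set K, IsLatIdeal I → DMClosed I → dmClosure I = I) := by
  refine ⟨fun I hI => dmClosure_isIdeal' hI, fun I J hI hJ => ⟨?_, ?_⟩,
    fun I hI hDM => hDM.symm⟩
  · -- join equality
    obtain ⟨hκI, hκIc⟩ := dmClosure_isIdeal' hI
    obtain ⟨hκJ, hκJc⟩ := dmClosure_isIdeal' hJ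
    have hup : upperBounds (idealJoin I J) = upperBounds I ∩ upperBounds J := by
      obtain ⟨i0, hi0⟩ := hI.1
      obtain ⟨j0, hj0⟩ := hJ.1
      apply subset_antisymm
      · intro z hz
        constructor
        · intro i hi
          exact hz ⟨i, hi, j0, hj0, le_sup_left⟩
        · intro j hj
          exact hz ⟨i0, hi0, j, hj, le_sup_right⟩
      · rintro z ⟨hz1, hz2⟩ w ⟨i, hi, j, hj, hw⟩
        exact le_trans hw (sup_le (hz1 hi) (hz2 hj))
    apply subset_antisymm
    · intro c hc
      apply claimA' hW hXjp hXgen _ _ hκI hκJ hκIc hκJc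
      intro z hz
      rw [upperBounds_dmClosure', upperBounds_dmClosure'] at hz
      exact hc (by rw [hup]; exact hz)
    · rintro w ⟨a, ha, b, hb, hw⟩ z hz
      rw [hup] at hz
      exact le_trans hw (sup_le (ha hz.1) (hb hz.2))
  · -- meet equality
    apply subset_antisymm
    · intro c hc
      constructor
      · intro z hz
        exact hc (fun v hv => hz hv.1)
      · intro z hz
        exact hc (fun v hv => hz hv.2)
    · rintro c ⟨hc1, hc2⟩ z hz
      exact claimB' hW hXmp hXgen I J hI hJ c hc1 hc2 z hz
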